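/- Let a ≥ 2, b ≥ 1 and 1 ≤ i ≤ a−1 be integers and let T be the modified subtractive algorithm on Λ^{a+b}. Then: (1) if x ∈ Λ^{a+b} satisfies σ(x) ≤ b·x_{a+b}, then σ(T(x)) ≤ b·(T(x))_{a+b} (i.e. T(A) ⊆ A where A = {x ∈ Λ^{a+b} : σ(x) ≤ b·x_{a+b}}); (2) if in addition b ≤ a+1−i, then for every x ∈ Λ^{a+b} with σ(x) > b·x_{a+b} one has σ(T(x)) ≥ b·(T(x))_{a+b}. -/

import Mathlib

open MeasureTheory Filter Topology

/-- `Λⁿ`: points of `ℝⁿ` with nonnegative, nondecreasing coordinates. -/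
def Lambda (n : ℕ) : Set (Fin n → ℝ) := {x | (∀ i, 0 ≤ x i) ∧ Monotone x}

/-- The modified subtractive algorithm: nondecreasing rearrangement of
`(x₁,…,x_a, x_{a+1}-x_i,…,x_{a+b}-x_i)` (1-based `i`; 0-based index `i-1`). -/
noncomputable def Tmod (a b i : ℕ) (x : Fin (a + b) → ℝ) : Fin (a + b) → ℝ :=
  let s : ℝ := if h : i - 1 < a + b then x ⟨i - 1, h⟩ else 0
  let y : Fin (a + b) → ℝ := fun j => if (j : ℕ) < a then x j else x j - s
  y ∘ Tuple.sort y

lemma statement18_aux (a b i : ℕ) (ha : 2 ≤ a) (hb : 1 ≤ b)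
    (hi1 : 1 ≤ i) (hi2 : i ≤ a - 1)
    (x : Fin (a + b) → ℝ) (hx : x ∈ Lambda (a + b)) :
    (∑ t, Tmod a b i x t = ∑ t, x t - (b : ℝ) * x ⟨i - 1, by omega⟩) ∧
    (x ⟨a + b - 1, Nat.sub_lt (by omega) one_pos⟩ - x ⟨i - 1, by omega⟩
      ≤ Tmod a b i x ⟨a + b - 1, Nat.sub_lt (by omega) one_pos⟩) ∧
    (Tmod a b i x ⟨a + b - 1, Nat.sub_lt (by omega) one_pos⟩ ≤ x ⟨a - 1, by omega⟩ ∨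
      Tmod a b i x ⟨a + b - 1, Nat.sub_lt (by omega) one_pos⟩
        ≤ x ⟨a + b - 1, Nat.sub_lt (by omega) one_pos⟩ - x ⟨i - 1, by omega⟩) ∧
    (b ≤ a + 1 - i →
      (b : ℝ) * (x ⟨a - 1, by omega⟩ + x ⟨i - 1, by omega⟩) ≤ ∑ t, x t) := by
  obtain ⟨hxnn, hxmono⟩ := hx
  have hia : i - 1 < a + b := by omega
  set s : ℝ := x ⟨i - 1, by omega⟩ with hs
  set y : Fin (a + b) → ℝ := fun j => if (j : ℕ) < a then x j else x j - s with hy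
  have hT : Tmod a b i x = y ∘ Tuple.sort y := by
    simp only [Tmod, dif_pos hia, hy, hs]
  -- extension of x to ℕ
  set X : ℕ → ℝ := fun k => if h : k < a + b then x ⟨k, h⟩ else 0 with hX
  have hXx : ∀ t : Fin (a + b), X (t : ℕ) = x t := by
    intro t
    simp [hX, t.isLt]
  have hXmono : ∀ k l : ℕ, k ≤ l → l < a + b → X k ≤ X l := by
    intro k l hkl hl
    have hk : k < a + b := lt_of_le_of_lt hkl hl
    simp only [hX, dif_pos hk, dif_pos hl]
    exact hxmono (by simpa [Fin.le_def] using hkl)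
  have hXnn : ∀ k, 0 ≤ X k := by
    intro k
    by_cases h : k < a + b
    · simp only [hX, dif_pos h]; exact hxnn _
    · simp [hX, h]
  have hEx : ∑ t, x t = ∑ k ∈ Finset.range (a + b), X k := by
    rw [← Fin.sum_univ_eq_sum_range X (a + b)]
    exact Finset.sum_congr rfl fun t _ => (hXx t).symm
  -- sum of Tmod
  have h1 : ∑ t, Tmod a b i x t = ∑ t, x t - (b : ℝ) * s := by
    rw [hT]
    have h2 : ∑ t, (y ∘ Tuple.sort y) t = ∑ t, y t :=
      Equiv.sum_comp (Tuple.sort y) y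
    rw [h2]
    have h3 : ∑ t, y t = ∑ t, (x t + if (t : ℕ) < a then 0 else -s) := by
      refine Finset.sum_congr rfl fun t _ => ?_
      simp only [hy]
      split_ifs <;> ring
    rw [h3, Finset.sum_add_distrib]
    have h4 : ∑ t : Fin (a + b), (if (t : ℕ) < a then (0 : ℝ) else -s)
        = ∑ k ∈ Finset.range (a + b), (if k < a then (0 : ℝ) else -s) := by
      rw [← Fin.sum_univ_eq_sum_range (fun k => if k < a then (0 : ℝ) else -s)]
    rw [h4, Finset.range_eq_Ico,
      ← Finset.sum_Ico_consecutive _ (Nat.zero_le a) (by omega : a ≤ a + b)]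
    have h5 : ∑ k ∈ Finset.Ico 0 a, (if k < a then (0 : ℝ) else -s) = 0 := by
      refine Finset.sum_eq_zero fun k hk => ?_
      rw [if_pos (Finset.mem_Ico.mp hk).2]
    have h6 : ∑ k ∈ Finset.Ico a (a + b), (if k < a then (0 : ℝ) else -s)
        = (b : ℝ) * (-s) := by
      rw [Finset.sum_congr rfl (fun k hk => if_neg (by
        have := (Finset.mem_Ico.mp hk).1; omega)),
        Finset.sum_const, Nat.card_Ico, nsmul_eq_mul]
      congr 1
      norm_cast
      omega
    rw [h5, h6]
    ring
  -- last coordinate of Tmod is the max of y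
  have hub : ∀ t : Fin (a + b), y t ≤ Tmod a b i x ⟨a + b - 1, Nat.sub_lt (by omega) one_pos⟩ := by
    intro t
    have hmono := Tuple.monotone_sort y
    have h7 : y t = (y ∘ Tuple.sort y) ((Tuple.sort y).symm t) := by
      simp
    rw [hT, h7]
    exact hmono (by
      rw [Fin.le_def]
      have := ((Tuple.sort y).symm t).isLt
      simpa using by omega)
  have hlast : x ⟨a + b - 1, Nat.sub_lt (by omega) one_pos⟩ - s ≤ Tmod a b i x ⟨a + b - 1, Nat.sub_lt (by omega) one_pos⟩ := by
    have := hub ⟨a + b - 1, Nat.sub_lt (by omega) one_pos⟩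
    have h8 : y ⟨a + b - 1, Nat.sub_lt (by omega) one_pos⟩ = x ⟨a + b - 1, Nat.sub_lt (by omega) one_pos⟩ - s := by
      simp only [hy]
      rw [if_neg (by simp; omega)]
    rwa [h8] at this
  have hMle : Tmod a b i x ⟨a + b - 1, Nat.sub_lt (by omega) one_pos⟩ ≤ x ⟨a - 1, by omega⟩ ∨
      Tmod a b i x ⟨a + b - 1, Nat.sub_lt (by omega) one_pos⟩ ≤ x ⟨a + b - 1, Nat.sub_lt (by omega) one_pos⟩ - s := by
    set j : Fin (a + b) := Tuple.sort y ⟨a + b - 1, Nat.sub_lt (by omega) one_pos⟩ with hj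
    have hM : Tmod a b i x ⟨a + b - 1, Nat.sub_lt (by omega) one_pos⟩ = y j := by rw [hT]; rfl
    by_cases hja : (j : ℕ) < a
    · left
      rw [hM, hy]
      simp only [if_pos hja]
      exact hxmono (by rw [Fin.le_def]; simp; omega)
    · right
      rw [hM, hy]
      simp only [if_neg hja]
      have : x j ≤ x ⟨a + b - 1, Nat.sub_lt (by omega) one_pos⟩ := by
        refine hxmono ?_
        rw [Fin.le_def]
        have := j.isLt
        simp; omega
      linarith
  -- counting bound
  have hcount : b ≤ a + 1 - i →
      (b : ℝ) * (x ⟨a - 1, by omega⟩ + s) ≤ ∑ t, x t := by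
    intro hba
    have hab : b ≤ a := by omega
    rw [hEx, Finset.range_eq_Ico]
    have hsub : Finset.Ico (a - b) (a + b) ⊆ Finset.Ico 0 (a + b) := by
      refine Finset.Ico_subset_Ico (Nat.zero_le _) le_rfl
    have h9 : ∑ k ∈ Finset.Ico (a - b) (a + b), X k ≤ ∑ k ∈ Finset.Ico 0 (a + b), X k :=
      Finset.sum_le_sum_of_subset_of_nonneg hsub (fun k _ _ => hXnn k)
    have h10 : ∑ k ∈ Finset.Ico (a - b) (a + b), X k
        = ∑ k ∈ Finset.Ico (a - b) a, X k + ∑ k ∈ Finset.Ico a (a + b), X k :=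
      (Finset.sum_Ico_consecutive _ (by omega) (by omega)).symm
    have h11 : (b : ℝ) * s ≤ ∑ k ∈ Finset.Ico (a - b) a, X k := by
      have hss : s = X (i - 1) := (hXx ⟨i - 1, by omega⟩).symm
      calc (b : ℝ) * s = ∑ _k ∈ Finset.Ico (a - b) a, s := by
            rw [Finset.sum_const, Nat.card_Ico, nsmul_eq_mul]
            congr 1; norm_cast; omega
        _ ≤ ∑ k ∈ Finset.Ico (a - b) a, X k := by
            refine Finset.sum_le_sum fun k hk => ?_
            have hk' := Finset.mem_Ico.mp hk
            rw [hss]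
            exact hXmono (i - 1) k (by omega) (by omega)
    have h12 : (b : ℝ) * x ⟨a - 1, by omega⟩ ≤ ∑ k ∈ Finset.Ico a (a + b), X k := by
      have hxx : x ⟨a - 1, by omega⟩ = X (a - 1) := (hXx ⟨a - 1, by omega⟩).symm
      calc (b : ℝ) * x ⟨a - 1, by omega⟩
          = ∑ _k ∈ Finset.Ico a (a + b), x ⟨a - 1, by omega⟩ := by
            rw [Finset.sum_const, Nat.card_Ico, nsmul_eq_mul]
            congr 1; norm_cast; omega
        _ ≤ ∑ k ∈ Finset.Ico a (a + b), X k := by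
            refine Finset.sum_le_sum fun k hk => ?_
            have hk' := Finset.mem_Ico.mp hk
            rw [hxx]
            exact hXmono (a - 1) k (by omega) (by omega)
    linarith
  exact ⟨h1, hlast, hMle, hcount⟩

/-- (1) `T(A) ⊆ A`, i.e. `x ∈ Λ^{a+b}` with `σ(x) ≤ b·x_{a+b}`
implies `σ(T(x)) ≤ b·(T(x))_{a+b}`; (2) if moreover `b ≤ a+1-i`, then
`σ(x) > b·x_{a+b}` implies `σ(T(x)) ≥ b·(T(x))_{a+b}` (i.e. `T⁻¹(A) ⊆ A`). -/
theorem statement18 (a b i : ℕ) (ha : 2 ≤ a) (hb : 1 ≤ b)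
    (hi1 : 1 ≤ i) (hi2 : i ≤ a - 1) :
    (∀ x ∈ Lambda (a + b), ∑ t, x t ≤ (b : ℝ) * x ⟨a + b - 1, by omega⟩ →
      ∑ t, Tmod a b i x t ≤ (b : ℝ) * Tmod a b i x ⟨a + b - 1, by omega⟩) ∧
    (b ≤ a + 1 - i → ∀ x ∈ Lambda (a + b),
      (b : ℝ) * x ⟨a + b - 1, by omega⟩ < ∑ t, x t →
      (b : ℝ) * Tmod a b i x ⟨a + b - 1, by omega⟩ ≤ ∑ t, Tmod a b i x t) := by
  constructor
  · intro x hx hle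
    obtain ⟨h1, hlast, hMle, hcount⟩ := statement18_aux a b i ha hb hi1 hi2 x hx
    have hbnn : (0 : ℝ) ≤ (b : ℝ) := by positivity
    nlinarith [hlast, h1]
  · intro hba x hx hlt
    obtain ⟨h1, hlast, hMle, hcount⟩ := statement18_aux a b i ha hb hi1 hi2 x hx
    have hbnn : (0 : ℝ) ≤ (b : ℝ) := by positivity
    have hc := hcount hba
    rcases hMle with hMle | hMle
    · nlinarith
    · nlinarith
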